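/- The quarter-plane Toeplitz operator T^{0,∞}_f on l²(ℤ≥0 × ℤ≥0; ℂ²) with symbol f(z,w) = [[z, −w⁻¹],[w, z⁻¹]] is Fredholm of index 1. -/

import Mathlib

open Module

open scoped ENNReal

noncomputable section QuarterPlaneAux

namespace QuarterPlaneAux

abbrev EE := EuclideanSpace ℂ (Fin 2)
abbrev QH := lp (fun _ : ℕ × ℕ => EE) 2

def qe (a b : ℂ) : EE := (WithLp.equiv 2 (Fin 2 → ℂ)).symm ![a, b]

lemma enorm_sq (x : EE) : ‖x‖^2 = ‖x 0‖^2 + ‖x 1‖^2 := by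
  rw [EuclideanSpace.norm_eq, Real.sq_sqrt (by positivity)]
  simp [Fin.sum_univ_two]

lemma ecomp_le (x : EE) (i : Fin 2) : ‖x i‖ ≤ ‖x‖ := by
  have h : ‖x i‖^2 ≤ ∑ j, ‖x j‖^2 :=
    Finset.single_le_sum (f := fun j => ‖x j‖^2) (fun _ _ => by positivity) (Finset.mem_univ i)
  calc ‖x i‖ = Real.sqrt (‖x i‖^2) := (Real.sqrt_sq (norm_nonneg _)).symm
    _ ≤ _ := by rw [EuclideanSpace.norm_eq]; exact Real.sqrt_le_sqrt h

lemma eext (x y : EE) (h0 : x 0 = y 0) (h1 : x 1 = y 1) : x = y := by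
  ext i; fin_cases i <;> assumption

lemma coef_mul_le (c : Prop) [Decidable c] (z : ℂ) {r : ℝ} (h : ‖z‖ ≤ r) :
    ‖(if c then 1 else (1:ℂ)/2) * z‖ ≤ r := by
  rw [norm_mul]
  have h1 : ‖(if c then 1 else (1:ℂ)/2)‖ ≤ 1 := by split_ifs <;> norm_num
  have h0 : (0:ℝ) ≤ ‖z‖ := norm_nonneg _
  nlinarith

/-- The parametrix `S = T* (T T*)⁻¹`, written out pointwise. -/
def sPre (w : ℕ × ℕ → EE) : ℕ × ℕ → EE := fun p =>
  qe ((w (p.1+1, p.2) 0 + w (p.1, p.2+1) 1) / 2)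
    (-(if p.2 = 0 then 0 else (if p.1 = 0 then 1 else (1:ℂ)/2) * w (p.1, p.2-1) 0)
      + (if p.1 = 0 then 0 else (if p.2 = 0 then 1 else (1:ℂ)/2) * w (p.1-1, p.2) 1))

lemma sPre_zero (w : ℕ × ℕ → EE) (p : ℕ × ℕ) :
    sPre w p 0 = (w (p.1+1, p.2) 0 + w (p.1, p.2+1) 1) / 2 := rfl

lemma sPre_one (w : ℕ × ℕ → EE) (p : ℕ × ℕ) :
    sPre w p 1 = -(if p.2 = 0 then 0 else (if p.1 = 0 then 1 else (1:ℂ)/2) * w (p.1, p.2-1) 0)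
      + (if p.1 = 0 then 0 else (if p.2 = 0 then 1 else (1:ℂ)/2) * w (p.1-1, p.2) 1) := rfl

lemma sPre_bound (w : ℕ × ℕ → EE) (p : ℕ × ℕ) :
    ‖sPre w p‖^2 ≤ 2 * (‖w (p.1+1, p.2)‖^2 + ‖w (p.1, p.2+1)‖^2
      + (if p.2 = 0 then 0 else ‖w (p.1, p.2-1)‖)^2
      + (if p.1 = 0 then 0 else ‖w (p.1-1, p.2)‖)^2) := by
  set A := ‖w (p.1+1, p.2)‖ with hA
  set B := ‖w (p.1, p.2+1)‖ with hB
  set C := (if p.2 = 0 then 0 else ‖w (p.1, p.2-1)‖) with hC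
  set D := (if p.1 = 0 then 0 else ‖w (p.1-1, p.2)‖) with hD
  have hA0 : 0 ≤ A := norm_nonneg _
  have hB0 : 0 ≤ B := norm_nonneg _
  have hC0 : 0 ≤ C := by rw [hC]; split_ifs <;> [rfl; exact norm_nonneg _]
  have hD0 : 0 ≤ D := by rw [hD]; split_ifs <;> [rfl; exact norm_nonneg _]
  have hc0 : ‖(sPre w p) 0‖ ≤ (A + B) / 2 := by
    rw [sPre_zero, norm_div]
    simp only [Complex.norm_ofNat]
    gcongr
    exact (norm_add_le _ _).trans (add_le_add (ecomp_le _ _) (ecomp_le _ _))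
  have hc1 : ‖(sPre w p) 1‖ ≤ C + D := by
    rw [sPre_one]
    refine (norm_add_le _ _).trans (add_le_add ?_ ?_)
    · rw [norm_neg, hC]
      by_cases h1 : p.2 = 0
      · simp [h1]
      · rw [if_neg h1, if_neg h1]
        exact coef_mul_le _ _ (ecomp_le _ _)
    · rw [hD]
      by_cases h1 : p.1 = 0
      · simp [h1]
      · rw [if_neg h1, if_neg h1]
        exact coef_mul_le _ _ (ecomp_le _ _)
  have hsq := enorm_sq (sPre w p)
  nlinarith [sq_nonneg (A - B), sq_nonneg (C - D), norm_nonneg ((sPre w p) 0),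
    norm_nonneg ((sPre w p) 1)]

lemma rpow_toReal_two (x : ℝ) : x ^ ((2:ℝ≥0∞)).toReal = x^2 := by
  rw [ENNReal.toReal_ofNat, show (2:ℝ) = ((2:ℕ):ℝ) by norm_num, Real.rpow_natCast]

lemma sum_comp_le (w : QH) (s : Finset (ℕ × ℕ)) (σ : ℕ × ℕ → ℕ × ℕ)
    (hσ : Set.InjOn σ s) : ∑ p ∈ s, ‖w (σ p)‖^2 ≤ ‖w‖^2 := by
  have heq := Finset.sum_image (g := σ) (f := fun q => ‖w q‖^2) (s := s)
    (fun x hx y hy h => hσ hx hy h)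
  rw [← heq]
  have h := lp.sum_rpow_le_norm_rpow (p := 2) (by norm_num) w (s.image σ)
  simpa [rpow_toReal_two] using h

lemma sum_ite_comp_le (w : QH) (s : Finset (ℕ × ℕ)) (P : ℕ × ℕ → Prop) [DecidablePred P]
    (σ : ℕ × ℕ → ℕ × ℕ) (hσ : Set.InjOn σ {p | ¬ P p}) :
    ∑ p ∈ s, (if P p then 0 else ‖w (σ p)‖)^2 ≤ ‖w‖^2 := by
  have he : ∀ p, (if P p then 0 else ‖w (σ p)‖)^2 = if ¬ P p then ‖w (σ p)‖^2 else 0 := by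
    intro p; split_ifs with h1 <;> simp_all
  rw [Finset.sum_congr rfl fun p _ => he p, ← Finset.sum_filter]
  exact sum_comp_le w _ σ (hσ.mono (by intro p hp; simpa using (Finset.mem_filter.mp hp).2))

lemma sPre_sum_le (w : QH) (s : Finset (ℕ × ℕ)) :
    ∑ p ∈ s, ‖sPre (⇑w) p‖^2 ≤ 8 * ‖w‖^2 := by
  have h1 : ∑ p ∈ s, ‖sPre (⇑w) p‖^2 ≤
      ∑ p ∈ s, 2 * (‖w (p.1+1, p.2)‖^2 + ‖w (p.1, p.2+1)‖^2
      + (if p.2 = 0 then 0 else ‖w (p.1, p.2-1)‖)^2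
      + (if p.1 = 0 then 0 else ‖w (p.1-1, p.2)‖)^2) :=
    Finset.sum_le_sum fun p _ => sPre_bound (⇑w) p
  refine h1.trans ?_
  rw [← Finset.mul_sum]
  have hA : ∑ p ∈ s, ‖w (p.1+1, p.2)‖^2 ≤ ‖w‖^2 :=
    sum_comp_le w s _ (fun p _ q _ h => by
      simp only [Prod.mk.injEq] at h; exact Prod.ext (by omega) h.2)
  have hB : ∑ p ∈ s, ‖w (p.1, p.2+1)‖^2 ≤ ‖w‖^2 :=
    sum_comp_le w s _ (fun p _ q _ h => by
      simp only [Prod.mk.injEq] at h; exact Prod.ext h.1 (by omega))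
  have hC : ∑ p ∈ s, (if p.2 = 0 then 0 else ‖w (p.1, p.2-1)‖)^2 ≤ ‖w‖^2 :=
    sum_ite_comp_le w s _ _ (fun p hp q hq h => by
      simp only [Set.mem_setOf_eq] at hp hq
      simp only [Prod.mk.injEq] at h; exact Prod.ext h.1 (by omega))
  have hD : ∑ p ∈ s, (if p.1 = 0 then 0 else ‖w (p.1-1, p.2)‖)^2 ≤ ‖w‖^2 :=
    sum_ite_comp_le w s _ _ (fun p hp q hq h => by
      simp only [Set.mem_setOf_eq] at hp hq
      simp only [Prod.mk.injEq] at h; exact Prod.ext (by omega) h.2)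
  have hsplit := Finset.sum_add_distrib (s := s)
    (f := fun p => ‖w (p.1+1, p.2)‖^2 + ‖w (p.1, p.2+1)‖^2
      + (if p.2 = 0 then 0 else ‖w (p.1, p.2-1)‖)^2)
    (g := fun p => (if p.1 = 0 then 0 else ‖w (p.1-1, p.2)‖)^2)
  rw [hsplit, Finset.sum_add_distrib, Finset.sum_add_distrib]
  nlinarith [norm_nonneg w]

lemma sPre_mem (w : QH) : Memℓp (sPre (⇑w)) 2 := by
  apply memℓp_gen' (C := 8 * ‖w‖^2)
  intro s
  calc ∑ p ∈ s, ‖sPre (⇑w) p‖ ^ (2:ℝ≥0∞).toReal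
      = ∑ p ∈ s, ‖sPre (⇑w) p‖^2 := by
        refine Finset.sum_congr rfl fun p _ => rpow_toReal_two _
    _ ≤ 8 * ‖w‖^2 := sPre_sum_le w s

lemma sPre_add (w z : ℕ × ℕ → EE) (p : ℕ × ℕ) :
    sPre (w + z) p = sPre w p + sPre z p := by
  ext i
  fin_cases i
  · show ((w (p.1+1,p.2) 0 + z (p.1+1,p.2) 0) + (w (p.1,p.2+1) 1 + z (p.1,p.2+1) 1))/2
      = (w (p.1+1,p.2) 0 + w (p.1,p.2+1) 1)/2 + (z (p.1+1,p.2) 0 + z (p.1,p.2+1) 1)/2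
    ring
  · show -(if p.2 = 0 then 0 else (if p.1 = 0 then 1 else (1:ℂ)/2) *
        (w (p.1, p.2-1) 0 + z (p.1, p.2-1) 0))
      + (if p.1 = 0 then 0 else (if p.2 = 0 then 1 else (1:ℂ)/2) *
        (w (p.1-1, p.2) 1 + z (p.1-1, p.2) 1))
      = (-(if p.2 = 0 then 0 else (if p.1 = 0 then 1 else (1:ℂ)/2) * w (p.1, p.2-1) 0)
      + (if p.1 = 0 then 0 else (if p.2 = 0 then 1 else (1:ℂ)/2) * w (p.1-1, p.2) 1))
      + (-(if p.2 = 0 then 0 else (if p.1 = 0 then 1 else (1:ℂ)/2) * z (p.1, p.2-1) 0)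
      + (if p.1 = 0 then 0 else (if p.2 = 0 then 1 else (1:ℂ)/2) * z (p.1-1, p.2) 1))
    split_ifs <;> ring

lemma sPre_smul (c : ℂ) (w : ℕ × ℕ → EE) (p : ℕ × ℕ) :
    sPre (c • w) p = c • sPre w p := by
  ext i
  fin_cases i
  · show (c * w (p.1+1,p.2) 0 + c * w (p.1,p.2+1) 1)/2
      = c * ((w (p.1+1,p.2) 0 + w (p.1,p.2+1) 1)/2)
    ring
  · show -(if p.2 = 0 then 0 else (if p.1 = 0 then 1 else (1:ℂ)/2) * (c * w (p.1, p.2-1) 0))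
      + (if p.1 = 0 then 0 else (if p.2 = 0 then 1 else (1:ℂ)/2) * (c * w (p.1-1, p.2) 1))
      = c * (-(if p.2 = 0 then 0 else (if p.1 = 0 then 1 else (1:ℂ)/2) * w (p.1, p.2-1) 0)
      + (if p.1 = 0 then 0 else (if p.2 = 0 then 1 else (1:ℂ)/2) * w (p.1-1, p.2) 1))
    split_ifs <;> ring

def Slin : QH →ₗ[ℂ] QH where
  toFun w := ⟨sPre (⇑w), sPre_mem w⟩
  map_add' w z := by
    apply lp.ext
    funext p
    show sPre (⇑(w + z)) p = sPre (⇑w) p + sPre (⇑z) p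
    rw [lp.coeFn_add]
    exact sPre_add _ _ p
  map_smul' c w := by
    apply lp.ext
    funext p
    show sPre (⇑(c • w)) p = c • sPre (⇑w) p
    rw [lp.coeFn_smul]
    exact sPre_smul c _ p

def Sop : QH →L[ℂ] QH :=
  Slin.mkContinuous 3 (by
    intro w
    refine lp.norm_le_of_forall_sum_le (by norm_num) (by positivity) (fun s => ?_)
    have h := sPre_sum_le w s
    have hw : 0 ≤ ‖w‖ := norm_nonneg w
    calc ∑ p ∈ s, ‖Slin w p‖ ^ (2:ℝ≥0∞).toReal
        = ∑ p ∈ s, ‖sPre (⇑w) p‖^2 := Finset.sum_congr rfl fun p _ => rpow_toReal_two _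
      _ ≤ 8 * ‖w‖^2 := h
      _ ≤ (3 * ‖w‖)^2 := by nlinarith
      _ = (3 * ‖w‖) ^ (2:ℝ≥0∞).toReal := (rpow_toReal_two _).symm)

lemma Sop_apply0 (w : QH) (m n : ℕ) :
    Sop w (m, n) 0 = (w (m+1, n) 0 + w (m, n+1) 1) / 2 := rfl

lemma Sop_apply1 (w : QH) (m n : ℕ) :
    Sop w (m, n) 1 = -(if n = 0 then 0 else (if m = 0 then 1 else (1:ℂ)/2) * w (m, n-1) 0)
      + (if m = 0 then 0 else (if n = 0 then 1 else (1:ℂ)/2) * w (m-1, n) 1) := rfl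

/-- A generator of the (one-dimensional) kernel. -/
def vv : QH := lp.single 2 ((0,0) : ℕ × ℕ) (qe 0 1)

lemma vv_self : (vv : ℕ × ℕ → EE) (0,0) = qe 0 1 := lp.single_apply_self 2 _ _

lemma vv_ne {p : ℕ × ℕ} (h : p ≠ (0,0)) : (vv : ℕ × ℕ → EE) p = 0 :=
  lp.single_apply_ne 2 _ _ h

lemma vv_c0 (p : ℕ × ℕ) : (vv : ℕ × ℕ → EE) p 0 = 0 := by
  rcases eq_or_ne p (0,0) with h | h
  · subst h; rw [vv_self]; rfl
  · rw [vv_ne h]; rfl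

lemma vv_c1_ne {p : ℕ × ℕ} (h : p ≠ (0,0)) : (vv : ℕ × ℕ → EE) p 1 = 0 := by
  rw [vv_ne h]; rfl

lemma vv_nonzero : vv ≠ 0 := by
  intro h
  have h1 : (vv : ℕ × ℕ → EE) (0,0) 1 = 1 := by rw [vv_self]; rfl
  rw [h] at h1
  have h2 : ((0 : QH) : ℕ × ℕ → EE) (0,0) 1 = 0 := by rw [lp.coeFn_zero]; rfl
  rw [h2] at h1
  exact zero_ne_one h1

lemma sub_smul_apply (u v : QH) (c : ℂ) (p : ℕ × ℕ) (i : Fin 2) :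
    (u - c • v) p i = u p i - c * v p i := by
  have h : (⇑(u - c • v)) p = u p - c • v p := by
    rw [lp.coeFn_sub]
    have h2 := lp.coeFn_smul c v
    show (⇑u - ⇑(c • v)) p = _
    rw [h2]; rfl
  rw [h]; rfl

lemma smul_apply' (c : ℂ) (v : QH) (p : ℕ × ℕ) (i : Fin 2) :
    (c • v) p i = c * v p i := by
  have h : (⇑(c • v)) p = c • (v p) := by rw [lp.coeFn_smul]; rfl
  rw [h]; rfl

section WithT

variable (T : QH →L[ℂ] QH)
  (hT : ∀ u : QH, ∀ m n : ℕ,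
      T u (m, n) 0 = (if m = 0 then 0 else u (m - 1, n) 0) - u (m, n + 1) 1 ∧
      T u (m, n) 1 = (if n = 0 then 0 else u (m, n - 1) 0) + u (m + 1, n) 1)

include hT in
lemma TS_eq (w : QH) : T (Sop w) = w := by
  apply lp.ext
  funext p
  obtain ⟨m, n⟩ := p
  refine eext _ _ ?_ ?_
  · rw [(hT (Sop w) m n).1]
    cases m with
    | zero => simp [Sop_apply0, Sop_apply1, Nat.succ_ne_zero]
    | succ m =>
      simp [Sop_apply0, Sop_apply1, Nat.succ_ne_zero]
      ring
  · rw [(hT (Sop w) m n).2]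
    cases n with
    | zero => simp [Sop_apply0, Sop_apply1, Nat.succ_ne_zero]
    | succ n =>
      simp [Sop_apply0, Sop_apply1, Nat.succ_ne_zero]
      ring

include hT in
lemma ST_eq (u : QH) : Sop (T u) = u - (u (0,0) 1) • vv := by
  apply lp.ext
  funext p
  obtain ⟨m, n⟩ := p
  refine eext _ _ ?_ ?_
  · rw [sub_smul_apply, Sop_apply0, (hT u (m+1) n).1, (hT u m (n+1)).2, vv_c0]
    simp [Nat.succ_ne_zero]
  · rw [sub_smul_apply, Sop_apply1]
    cases m with
    | zero =>
      cases n with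
      | zero =>
        rw [vv_self]
        simp [qe]
      | succ n =>
        rw [vv_ne (by simp)]
        simp [Nat.succ_ne_zero, (hT u 0 n).1]
    | succ m =>
      cases n with
      | zero =>
        rw [vv_ne (by simp)]
        simp [Nat.succ_ne_zero, (hT u m 0).2]
      | succ n =>
        rw [vv_ne (by simp)]
        simp [Nat.succ_ne_zero, (hT u (m+1) n).1, (hT u m (n+1)).2]
        ring

include hT in
lemma T_vv : T vv = 0 := by
  apply lp.ext
  funext p
  obtain ⟨m, n⟩ := p
  rw [lp.coeFn_zero]
  refine eext _ _ ?_ ?_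
  · rw [(hT vv m n).1, vv_c1_ne (by simp)]
    split_ifs with h
    · simp
    · rw [vv_c0]; simp
  · rw [(hT vv m n).2, vv_c1_ne (by simp)]
    split_ifs with h
    · simp
    · rw [vv_c0]; simp

include hT in
lemma ker_T : LinearMap.ker (T : QH →ₗ[ℂ] QH) = Submodule.span ℂ {vv} := by
  ext u
  rw [LinearMap.mem_ker, Submodule.mem_span_singleton]
  constructor
  · intro hu
    have hu' : T u = 0 := hu
    have hz : ∀ (m n : ℕ) (i : Fin 2), T u (m, n) i = 0 := by
      intro m n i
      have h : ⇑(T u) = 0 := by rw [hu']; exact lp.coeFn_zero _ _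
      rw [h]; rfl
    have e0 : ∀ m n : ℕ, (if m = 0 then 0 else u (m-1, n) 0) - u (m, n+1) 1 = 0 :=
      fun m n => by rw [← (hT u m n).1]; exact hz m n 0
    have e1 : ∀ m n : ℕ, (if n = 0 then 0 else u (m, n-1) 0) + u (m+1, n) 1 = 0 :=
      fun m n => by rw [← (hT u m n).2]; exact hz m n 1
    have h0 : ∀ m n : ℕ, u (m, n) 0 = 0 := by
      intro m n
      have a := e0 (m+1) n
      have b := e1 m (n+1)
      simp only [Nat.succ_ne_zero, if_false, Nat.succ_sub_one] at a b
      linear_combination (a + b) / 2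
    have h1c : ∀ m n : ℕ, u (m+1, n+1) 1 = 0 := by
      intro m n
      have a := e0 (m+1) n
      simp only [Nat.succ_ne_zero, if_false, Nat.succ_sub_one] at a
      rw [h0 m n] at a
      linear_combination -a
    have h1a : ∀ n : ℕ, u (0, n+1) 1 = 0 := by
      intro n
      have a := e0 0 n
      simp only [if_pos, zero_sub, neg_eq_zero] at a
      exact a
    have h1b : ∀ m : ℕ, u (m+1, 0) 1 = 0 := by
      intro m
      have a := e1 m 0
      simp only [if_pos, zero_add] at a
      exact a
    refine ⟨u (0,0) 1, ?_⟩
    apply lp.ext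
    funext p
    obtain ⟨m, n⟩ := p
    refine (eext _ _ ?_ ?_).symm
    · rw [smul_apply', vv_c0, h0]; ring
    · rw [smul_apply']
      cases m with
      | zero =>
        cases n with
        | zero => rw [vv_self]; show u (0,0) 1 = _ * 1; ring
        | succ n => rw [vv_c1_ne (by simp), h1a]; ring
      | succ m =>
        cases n with
        | zero => rw [vv_c1_ne (by simp), h1b]; ring
        | succ n => rw [vv_c1_ne (by simp), h1c]; ring
  · rintro ⟨c, rfl⟩
    show T (c • vv) = 0
    rw [map_smul, T_vv T hT, smul_zero]

include hT in
lemma ST_compact : IsCompactOperator ⇑(Sop * T - 1) := by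
  have hfun : ∀ u : QH, (Sop * T - 1) u = (-(u (0,0) 1)) • vv := by
    intro u
    have h : (Sop * T - 1) u = Sop (T u) - u := rfl
    rw [h, ST_eq T hT u, neg_smul]
    abel
  refine ⟨(fun c : ℂ => c • vv) '' Metric.closedBall 0 1, ?_, ?_⟩
  · exact (isCompact_closedBall 0 1).image (continuous_id.smul continuous_const)
  · refine Filter.mem_of_superset (Metric.closedBall_mem_nhds 0 one_pos) ?_
    intro u hu
    refine ⟨-(u (0,0) 1), ?_, (hfun u).symm⟩
    rw [Metric.mem_closedBall, dist_zero_right, norm_neg]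
    calc ‖u (0,0) 1‖ ≤ ‖u (0,0)‖ := ecomp_le _ _
      _ ≤ ‖u‖ := lp.norm_apply_le_norm (by norm_num) u _
      _ ≤ 1 := by simpa [Metric.mem_closedBall, dist_zero_right] using hu

include hT in
lemma TS_compact : IsCompactOperator ⇑(T * Sop - 1) := by
  have h : T * Sop - 1 = 0 := by
    ext w
    have h2 : (T * Sop - 1) w = T (Sop w) - w := rfl
    rw [h2, TS_eq T hT w, sub_self]
    rfl
  rw [h]
  have hc : ⇑(0 : QH →L[ℂ] QH) = (0 : QH → QH) := rfl
  rw [hc]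
  exact isCompactOperator_zero

end WithT

end QuarterPlaneAux

end QuarterPlaneAux

open QuarterPlaneAux in
/-- The quarter-plane Toeplitz operator on `l²(ℤ≥0 × ℤ≥0; ℂ²)` with symbol
`f(z,w) = [[z, −w⁻¹],[w, z⁻¹]]`, i.e. `T = [[S₁, −S₂*],[S₂, S₁*]]` in terms of the shift
operators `S₁, S₂` on the quarter lattice (Dirichlet boundary condition):
`(T u)(m,n)₀ = u(m−1,n)₀ − u(m,n+1)₁` and `(T u)(m,n)₁ = u(m,n−1)₀ + u(m+1,n)₁`
(terms with negative indices being `0`).  This operator is Fredholm of index `1`. -/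
theorem quarterPlane_toeplitz_index_one
    (T : lp (fun _ : ℕ × ℕ => EuclideanSpace ℂ (Fin 2)) 2 →L[ℂ]
      lp (fun _ : ℕ × ℕ => EuclideanSpace ℂ (Fin 2)) 2)
    (hT : ∀ u : lp (fun _ : ℕ × ℕ => EuclideanSpace ℂ (Fin 2)) 2, ∀ m n : ℕ,
      T u (m, n) 0 = (if m = 0 then 0 else u (m - 1, n) 0) - u (m, n + 1) 1 ∧
      T u (m, n) 1 = (if n = 0 then 0 else u (m, n - 1) 0) + u (m + 1, n) 1) :
    (∃ S : lp (fun _ : ℕ × ℕ => EuclideanSpace ℂ (Fin 2)) 2 →L[ℂ]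
        lp (fun _ : ℕ × ℕ => EuclideanSpace ℂ (Fin 2)) 2,
      IsCompactOperator ⇑(S * T - 1) ∧ IsCompactOperator ⇑(T * S - 1)) ∧
    FiniteDimensional ℂ (LinearMap.ker (T : lp (fun _ : ℕ × ℕ => EuclideanSpace ℂ (Fin 2)) 2
      →ₗ[ℂ] lp (fun _ : ℕ × ℕ => EuclideanSpace ℂ (Fin 2)) 2)) ∧
    FiniteDimensional ℂ (lp (fun _ : ℕ × ℕ => EuclideanSpace ℂ (Fin 2)) 2 ⧸
      LinearMap.range (T : lp (fun _ : ℕ × ℕ => EuclideanSpace ℂ (Fin 2)) 2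
        →ₗ[ℂ] lp (fun _ : ℕ × ℕ => EuclideanSpace ℂ (Fin 2)) 2)) ∧
    ((finrank ℂ (LinearMap.ker (T : lp (fun _ : ℕ × ℕ => EuclideanSpace ℂ (Fin 2)) 2
        →ₗ[ℂ] lp (fun _ : ℕ × ℕ => EuclideanSpace ℂ (Fin 2)) 2)) : ℤ) -
      (finrank ℂ (lp (fun _ : ℕ × ℕ => EuclideanSpace ℂ (Fin 2)) 2 ⧸
        LinearMap.range (T : lp (fun _ : ℕ × ℕ => EuclideanSpace ℂ (Fin 2)) 2
          →ₗ[ℂ] lp (fun _ : ℕ × ℕ => EuclideanSpace ℂ (Fin 2)) 2)) : ℤ) = 1) := by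
  have hker := ker_T T hT
  have hrange : LinearMap.range (T : QH →ₗ[ℂ] QH) = ⊤ :=
    LinearMap.range_eq_top.mpr (fun w => ⟨Sop w, TS_eq T hT w⟩)
  haveI hsub : Subsingleton (QH ⧸ LinearMap.range (T : QH →ₗ[ℂ] QH)) := by
    rw [hrange]
    exact Submodule.Quotient.subsingleton_iff.mpr rfl
  refine ⟨⟨Sop, ST_compact T hT, TS_compact T hT⟩, ?_, ?_, ?_⟩
  · rw [hker]
    infer_instance
  · infer_instance
  · rw [hker, finrank_span_singleton vv_nonzero,
      Module.finrank_zero_of_subsingleton (M := QH ⧸ LinearMap.range (T : QH →ₗ[ℂ] QH))]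
    norm_num
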